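/- Let ν > 2 and set κ = Γ((ν+1)/2)(ν − 1) / (2√π Γ(ν/2)). Then for every t > 0, 1 / (1 − F_ν(t)) ≤ (t² + ν)^{ν/2} / κ. -/

import Mathlib

open MeasureTheory Real Set Filter

-- real Beta integral
lemma realBeta {a b : ℝ} (ha : 0 < a) (hb : 0 < b) :
    ∫ x in (0:ℝ)..1, x ^ (a - 1) * (1 - x) ^ (b - 1) =
      Real.Gamma a * Real.Gamma b / Real.Gamma (a + b) := by
  have hab : Real.Gamma (a + b) ≠ 0 := (Real.Gamma_pos_of_pos (by linarith)).ne'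
  have hC := Complex.Gamma_mul_Gamma_eq_betaIntegral
    (s := (a:ℂ)) (t := (b:ℂ)) (by simpa using ha) (by simpa using hb)
  have hcast : Complex.betaIntegral a b =
      ((∫ x in (0:ℝ)..1, x ^ (a - 1) * (1 - x) ^ (b - 1) : ℝ) : ℂ) := by
    rw [Complex.betaIntegral, ← intervalIntegral.integral_ofReal]
    refine intervalIntegral.integral_congr fun x hx => ?_
    rw [uIcc_of_le (by norm_num : (0:ℝ) ≤ 1)] at hx
    push_cast
    rw [Complex.ofReal_cpow (by exact hx.1), Complex.ofReal_cpow (by linarith [hx.2])]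
    push_cast
    ring
  rw [hcast] at hC
  have : Complex.Gamma (a + b) = ((Real.Gamma (a+b) : ℝ) : ℂ) := by
    rw [← Complex.ofReal_add, Complex.Gamma_ofReal]
  rw [Complex.Gamma_ofReal, Complex.Gamma_ofReal, ← Complex.ofReal_add, Complex.Gamma_ofReal]
    at hC
  have := hC
  field_simp
  rw [mul_comm]
  exact_mod_cast this.symm


lemma pointwise_subst {ν u : ℝ} (hν : 0 < ν) (hu : 0 < u) :
    |2 * u * ν / (u ^ 2 + ν) ^ 2| *
      ((u ^ 2 / (u ^ 2 + ν)) ^ (-(1/2) : ℝ) * (1 - u ^ 2 / (u ^ 2 + ν)) ^ (ν/2 - 1)) =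
      (2 / Real.sqrt ν) * (1 + u ^ 2 / ν) ^ (-((ν + 1) / 2)) := by
  have hs : (0:ℝ) < u ^ 2 + ν := by positivity
  have h1 : (1 : ℝ) - u ^ 2 / (u ^ 2 + ν) = ν / (u ^ 2 + ν) := by field_simp; ring
  have h2 : (1 : ℝ) + u ^ 2 / ν = (u ^ 2 + ν) / ν := by field_simp; ring
  rw [h1, h2, abs_of_pos (by positivity)]
  have hL : (0:ℝ) < 2 * u * ν / (u ^ 2 + ν) ^ 2 *
      ((u ^ 2 / (u ^ 2 + ν)) ^ (-(1/2) : ℝ) * (ν / (u ^ 2 + ν)) ^ (ν/2 - 1)) := by positivity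
  have hR : (0:ℝ) < (2 / Real.sqrt ν) * ((u ^ 2 + ν) / ν) ^ (-((ν + 1) / 2)) := by positivity
  rw [← Real.exp_log hL, ← Real.exp_log hR]
  congr 1
  have hq : (0:ℝ) < u ^ 2 / (u ^ 2 + ν) := by positivity
  have hsν : (0:ℝ) < (u ^ 2 + ν) / ν := by positivity
  have n1 : (2 * u * ν : ℝ) ≠ 0 := by positivity
  have n2 : ((u ^ 2 + ν) ^ 2 : ℝ) ≠ 0 := by positivity
  have n3 : (2 * u * ν / (u ^ 2 + ν) ^ 2 : ℝ) ≠ 0 := by positivity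
  have n4 : ((u ^ 2 / (u ^ 2 + ν)) ^ (-(1/2) : ℝ) : ℝ) ≠ 0 := by positivity
  have n5 : ((ν / (u ^ 2 + ν)) ^ (ν/2 - 1) : ℝ) ≠ 0 := by positivity
  have n6 : (2 / Real.sqrt ν : ℝ) ≠ 0 := by positivity
  have n7 : (((u ^ 2 + ν) / ν) ^ (-((ν + 1) / 2)) : ℝ) ≠ 0 := by positivity
  have n8 : (2 * u : ℝ) ≠ 0 := by positivity
  have hqν : (0:ℝ) < ν / (u ^ 2 + ν) := by positivity
  rw [Real.log_mul n3 (mul_ne_zero n4 n5), Real.log_mul n4 n5, Real.log_mul n6 n7,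
    Real.log_div n1 n2, Real.log_rpow hq, Real.log_rpow hqν, Real.log_rpow hsν,
    Real.log_div (pow_ne_zero 2 hu.ne') hs.ne', Real.log_div hν.ne' hs.ne',
    Real.log_div hs.ne' hν.ne', Real.log_mul n8 hν.ne', Real.log_mul two_ne_zero hu.ne',
    Real.log_div two_ne_zero (Real.sqrt_ne_zero'.2 hν), Real.log_pow, Real.log_pow,
    Real.log_sqrt hν.le]
  push_cast
  ring

lemma f_image {ν : ℝ} (hν : 0 < ν) :
    (fun u : ℝ => u ^ 2 / (u ^ 2 + ν)) '' Ioi 0 = Ioo 0 1 := by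
  ext x
  constructor
  · rintro ⟨u, hu, rfl⟩
    have hu : (0:ℝ) < u := hu
    have hs : (0:ℝ) < u ^ 2 + ν := by positivity
    constructor
    · positivity
    · rw [div_lt_one hs]; linarith
  · rintro ⟨hx0, hx1⟩
    refine ⟨Real.sqrt (ν * x / (1 - x)), ?_, ?_⟩
    · have : (0:ℝ) < ν * x / (1 - x) := by
        apply div_pos (by positivity) (by linarith)
      exact Real.sqrt_pos.2 this
    · have h1x : (0:ℝ) < 1 - x := by linarith
      have : (0:ℝ) ≤ ν * x / (1 - x) := by positivity
      show Real.sqrt (ν * x / (1 - x)) ^ 2 / (Real.sqrt (ν * x / (1 - x)) ^ 2 + ν) = x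
      rw [Real.sq_sqrt this]
      field_simp
      ring

lemma f_inj {ν : ℝ} (hν : 0 < ν) :
    Set.InjOn (fun u : ℝ => u ^ 2 / (u ^ 2 + ν)) (Ioi 0) := by
  intro a ha b hb hab
  have ha : (0:ℝ) < a := ha
  have hb : (0:ℝ) < b := hb
  have hsa : (0:ℝ) < a ^ 2 + ν := by positivity
  have hsb : (0:ℝ) < b ^ 2 + ν := by positivity
  simp only at hab
  rw [div_eq_div_iff hsa.ne' hsb.ne'] at hab
  have h2 : a ^ 2 = b ^ 2 := by nlinarith
  nlinarith

lemma f_deriv {ν : ℝ} (hν : 0 < ν) (u : ℝ) :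
    HasDerivAt (fun u : ℝ => u ^ 2 / (u ^ 2 + ν))
      (2 * u * ν / (u ^ 2 + ν) ^ 2) u := by
  have hs : (0:ℝ) < u ^ 2 + ν := by positivity
  have h1 : HasDerivAt (fun u : ℝ => u ^ 2) (2 * u) u := by
    simpa using hasDerivAt_pow 2 u
  have h2 : HasDerivAt (fun u : ℝ => u ^ 2 + ν) (2 * u) u := h1.add_const ν
  have := h1.div h2 hs.ne'
  refine this.congr_deriv ?_
  ring

lemma D_integral_Ioi {ν : ℝ} (hν : 0 < ν) :
    ∫ u in Ioi (0:ℝ), (1 + u ^ 2 / ν) ^ (-((ν + 1) / 2)) =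
      Real.sqrt ν * (Real.sqrt π * Real.Gamma (ν/2)) / (2 * Real.Gamma ((ν+1)/2)) := by
  have hsν : (0:ℝ) < Real.sqrt ν := Real.sqrt_pos.2 hν
  have key := integral_image_eq_integral_abs_deriv_smul (s := Ioi 0)
    (f := fun u : ℝ => u ^ 2 / (u ^ 2 + ν)) (f' := fun u => 2 * u * ν / (u ^ 2 + ν) ^ 2)
    measurableSet_Ioi (fun x _ => (f_deriv hν x).hasDerivWithinAt) (f_inj hν)
    (fun x : ℝ => x ^ ((1:ℝ)/2 - 1) * (1 - x) ^ (ν/2 - 1))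
  rw [f_image hν] at key
  have rhs_eq : ∫ u in Ioi (0:ℝ), |2 * u * ν / (u ^ 2 + ν) ^ 2| •
      ((fun x : ℝ => x ^ ((1:ℝ)/2 - 1) * (1 - x) ^ (ν/2 - 1)) (u ^ 2 / (u ^ 2 + ν))) =
      ∫ u in Ioi (0:ℝ), (2 / Real.sqrt ν) * (1 + u ^ 2 / ν) ^ (-((ν + 1) / 2)) := by
    refine setIntegral_congr_fun measurableSet_Ioi fun u hu => ?_
    have hu : (0:ℝ) < u := hu
    rw [smul_eq_mul, show ((1:ℝ)/2 - 1) = (-(1/2) : ℝ) by norm_num]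
    exact pointwise_subst hν hu
  rw [rhs_eq, integral_const_mul] at key
  have beta_eq : ∫ x in Ioo (0:ℝ) 1, x ^ ((1:ℝ)/2 - 1) * (1 - x) ^ (ν/2 - 1) =
      Real.sqrt π * Real.Gamma (ν/2) / Real.Gamma ((ν+1)/2) := by
    rw [← integral_Ioc_eq_integral_Ioo, ← intervalIntegral.integral_of_le zero_le_one,
      realBeta (by norm_num) (by positivity), Real.Gamma_one_half_eq,
      show (1:ℝ)/2 + ν/2 = (ν+1)/2 by ring]
  rw [beta_eq] at key
  have hΓ : (0:ℝ) < Real.Gamma ((ν+1)/2) := Real.Gamma_pos_of_pos (by linarith)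
  have hΓ2 : (0:ℝ) < Real.Gamma (ν/2) := Real.Gamma_pos_of_pos (by linarith)
  have hπ : (0:ℝ) < Real.sqrt π := Real.sqrt_pos.2 Real.pi_pos
  field_simp at key ⊢
  nlinarith [key, mul_pos hsν hπ]


lemma D_integrable {ν : ℝ} (hν : 0 < ν) :
    Integrable (fun u : ℝ => (1 + u ^ 2 / ν) ^ (-((ν + 1) / 2))) := by
  have h1 : Integrable (fun x : ℝ => (1 + ‖x‖ ^ 2) ^ (-(ν + 1) / 2)) :=
    integrable_rpow_neg_one_add_norm_sq (E := ℝ) (by simp; linarith)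
  have h2 := h1.comp_div (R := Real.sqrt ν) (Real.sqrt_ne_zero'.2 hν)
  refine h2.congr (Eventually.of_forall fun x => ?_)
  simp only [norm_eq_abs, sq_abs, div_pow, Real.sq_sqrt hν.le, neg_div]

lemma D_total {ν : ℝ} (hν : 0 < ν) :
    ∫ u : ℝ, (1 + u ^ 2 / ν) ^ (-((ν + 1) / 2)) =
      2 * ∫ u in Ioi (0:ℝ), (1 + u ^ 2 / ν) ^ (-((ν + 1) / 2)) := by
  have hint := D_integrable hν
  rw [← intervalIntegral.integral_Iic_add_Ioi (b := (0:ℝ)) hint.integrableOn hint.integrableOn]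
  have : ∫ u in Iic (0:ℝ), (1 + u ^ 2 / ν) ^ (-((ν + 1) / 2)) =
      ∫ u in Ioi (0:ℝ), (1 + u ^ 2 / ν) ^ (-((ν + 1) / 2)) := by
    rw [show Iic (0:ℝ) = Iic (-0) by norm_num, ← integral_comp_neg_Ioi]
    simp
  rw [this]; ring

lemma phi_le_D {ν u : ℝ} (hν : 0 < ν) (hu : 0 < u) :
    ν ^ ((ν+1)/2) * (u * (u ^ 2 + ν) ^ (-(ν/2) - 1)) ≤ (1 + u ^ 2 / ν) ^ (-((ν + 1) / 2)) := by
  have hs : (0:ℝ) < u ^ 2 + ν := by positivity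
  have hD : (1 + u ^ 2 / ν) ^ (-((ν + 1) / 2)) =
      ν ^ ((ν+1)/2) * (u ^ 2 + ν) ^ (-((ν + 1) / 2)) := by
    have h2 : (1 : ℝ) + u ^ 2 / ν = (u ^ 2 + ν) / ν := by field_simp; ring
    rw [h2, Real.div_rpow hs.le hν.le, Real.rpow_neg hs.le, Real.rpow_neg hν.le]
    field_simp
  have hsplit : (u ^ 2 + ν) ^ (-(ν/2) - 1 : ℝ) =
      (u ^ 2 + ν) ^ (-((ν + 1) / 2)) * (u ^ 2 + ν) ^ (-(1/2) : ℝ) := by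
    rw [← Real.rpow_add hs]; ring_nf
  rw [hD, hsplit]
  have key : u * (u ^ 2 + ν) ^ (-(1/2) : ℝ) ≤ 1 := by
    rw [Real.rpow_neg hs.le, ← div_eq_mul_inv, div_le_one (by positivity)]
    calc u = (u ^ 2) ^ ((1:ℝ)/2) := by
            rw [← Real.rpow_natCast u 2, ← Real.rpow_mul hu.le]; norm_num
      _ ≤ (u ^ 2 + ν) ^ ((1:ℝ)/2) := by
            apply Real.rpow_le_rpow (by positivity) (by linarith) (by norm_num)
      _ = (u ^ 2 + ν) ^ ((1:ℝ)/2) := rfl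
  calc ν ^ ((ν+1)/2) * (u * ((u ^ 2 + ν) ^ (-((ν + 1) / 2)) * (u ^ 2 + ν) ^ (-(1/2) : ℝ)))
      = ν ^ ((ν+1)/2) * (u ^ 2 + ν) ^ (-((ν + 1) / 2)) * (u * (u ^ 2 + ν) ^ (-(1/2) : ℝ)) := by
        ring
    _ ≤ ν ^ ((ν+1)/2) * (u ^ 2 + ν) ^ (-((ν + 1) / 2)) * 1 := by
        apply mul_le_mul_of_nonneg_left key (by positivity)
    _ = ν ^ ((ν+1)/2) * (u ^ 2 + ν) ^ (-((ν + 1) / 2)) := by ring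

lemma phi_integral {ν t : ℝ} (hν : 0 < ν) (ht : 0 < t) :
    ∫ u in Ioi t, ν ^ ((ν+1)/2) * (u * (u ^ 2 + ν) ^ (-(ν/2) - 1)) =
      ν ^ ((ν-1)/2) * (t ^ 2 + ν) ^ (-(ν/2)) := by
  have hc : (0:ℝ) < ν ^ ((ν+1)/2) / ν := by positivity
  have hderiv : ∀ x ∈ Ici t, HasDerivAt
      (fun u : ℝ => -(ν ^ ((ν+1)/2) / ν) * (u ^ 2 + ν) ^ (-(ν/2)))
      (ν ^ ((ν+1)/2) * (x * (x ^ 2 + ν) ^ (-(ν/2) - 1))) x := by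
    intro x _
    have hs : (0:ℝ) < x ^ 2 + ν := by positivity
    have h1 : HasDerivAt (fun u : ℝ => u ^ 2 + ν) (2 * x) x := by
      simpa using (hasDerivAt_pow 2 x).add_const ν
    have h2 := (h1.rpow_const (p := -(ν/2)) (Or.inl hs.ne')).const_mul
      (-(ν ^ ((ν+1)/2) / ν))
    refine h2.congr_deriv ?_
    field_simp
  have hint : IntegrableOn
      (fun u : ℝ => ν ^ ((ν+1)/2) * (u * (u ^ 2 + ν) ^ (-(ν/2) - 1))) (Ioi t) := by
    refine Integrable.mono' ((D_integrable hν).integrableOn) ?_ ?_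
    · apply Continuous.aestronglyMeasurable
      apply continuous_const.mul
      apply continuous_id.mul
      apply Continuous.rpow_const ((continuous_pow 2).add continuous_const)
      intro x
      exact Or.inl (by simp only [Pi.add_apply]; positivity)
    · rw [ae_restrict_iff' measurableSet_Ioi]
      refine Eventually.of_forall fun u hu => ?_
      have hu0 : (0:ℝ) < u := lt_trans ht hu
      rw [Real.norm_eq_abs, abs_of_nonneg (by positivity)]
      exact phi_le_D hν hu0
  have htend : Tendsto (fun u : ℝ => -(ν ^ ((ν+1)/2) / ν) * (u ^ 2 + ν) ^ (-(ν/2)))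
      atTop (nhds 0) := by
    have h1 : Tendsto (fun u : ℝ => u ^ 2 + ν) atTop atTop :=
      tendsto_atTop_add_const_right _ ν (tendsto_pow_atTop two_ne_zero)
    have h2 : Tendsto (fun x : ℝ => x ^ (-(ν/2))) atTop (nhds 0) :=
      tendsto_rpow_neg_atTop (by positivity)
    have := (h2.comp h1).const_mul (-(ν ^ ((ν+1)/2) / ν))
    simpa using this
  have := integral_Ioi_of_hasDerivAt_of_tendsto' hderiv hint htend
  rw [this]
  have hν2 : ν ^ ((ν+1)/2) / ν = ν ^ ((ν-1)/2) := by
    rw [show (ν-1)/2 = (ν+1)/2 - 1 by ring, Real.rpow_sub hν, Real.rpow_one]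
  rw [← hν2]
  ring

lemma scalar_ineq {ν : ℝ} (hν : 2 < ν) : (ν - 1) / 2 ≤ ν ^ ((ν - 2) / 2) := by
  have hx : (0:ℝ) ≤ (ν - 2) / 2 := by linarith
  have h1 : (2:ℝ) ^ ((ν - 2) / 2) ≤ ν ^ ((ν - 2) / 2) :=
    Real.rpow_le_rpow (by norm_num) (by linarith) hx
  have h2 : (ν - 1) / 2 ≤ (2:ℝ) ^ ((ν - 2) / 2) := by
    set x := (ν - 2) / 2 with hxdef
    have hl : (0.6931471803:ℝ) < Real.log 2 := Real.log_two_gt_d9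
    have hl1 : Real.log 2 < 0.6931471808 := Real.log_two_lt_d9
    have hq := Real.quadratic_le_exp_of_nonneg
      (mul_nonneg (Real.log_nonneg one_le_two) hx)
    rw [Real.rpow_def_of_pos two_pos]
    have hle : (ν - 1) / 2 ≤ 1 + Real.log 2 * x + (Real.log 2 * x) ^ 2 / 2 := by
      have hν1 : ν - 1 = 2 * x + 1 := by rw [hxdef]; ring
      rw [hν1]
      nlinarith [sq_nonneg (Real.log 2 ^ 2 * x - (1 - Real.log 2)), sq_nonneg x]
    linarith
  linarith

/-- The CDF of the Student's t distribution with `ν` degrees of freedom. -/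
noncomputable def tCDF (ν t : ℝ) : ℝ :=
  ∫ u in Set.Iic t,
    (Real.Gamma ((ν + 1) / 2) / (Real.sqrt (ν * Real.pi) * Real.Gamma (ν / 2))) *
      (1 + u ^ 2 / ν) ^ (-((ν + 1) / 2))

/-- Corollary of the Mills-ratio type bound with `m = 1`:
for `t > 0`, `1 / (1 - F_ν(t)) ≤ (t² + ν)^{ν/2} / κ`. -/
theorem mills_ratio_t_corollary (ν : ℝ) (hν : 2 < ν) (t : ℝ) (ht : 0 < t) :
    1 / (1 - tCDF ν t) ≤
      (t ^ 2 + ν) ^ (ν / 2) /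
        (Real.Gamma ((ν + 1) / 2) * (ν - 1) / (2 * Real.sqrt Real.pi * Real.Gamma (ν / 2))) := by
  have hν0 : (0:ℝ) < ν := by linarith
  set c : ℝ := Real.Gamma ((ν + 1) / 2) / (Real.sqrt (ν * Real.pi) * Real.Gamma (ν / 2)) with hc
  set D : ℝ → ℝ := fun u => (1 + u ^ 2 / ν) ^ (-((ν + 1) / 2)) with hD
  have hΓp : (0:ℝ) < Real.Gamma ((ν + 1) / 2) := Real.Gamma_pos_of_pos (by linarith)
  have hΓν : (0:ℝ) < Real.Gamma (ν / 2) := Real.Gamma_pos_of_pos (by linarith)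
  have hsπ : (0:ℝ) < Real.sqrt π := Real.sqrt_pos.2 Real.pi_pos
  have hsν : (0:ℝ) < Real.sqrt ν := Real.sqrt_pos.2 hν0
  have hsνπ : Real.sqrt (ν * π) = Real.sqrt ν * Real.sqrt π := Real.sqrt_mul hν0.le π
  have hcpos : (0:ℝ) < c := by rw [hc, hsνπ]; positivity
  have hint := D_integrable hν0
  -- tCDF = c * ∫_{Iic t} D
  have h1 : tCDF ν t = c * ∫ u in Iic t, D u := by
    rw [tCDF, integral_const_mul]
  -- split
  have h2 : (∫ u in Iic t, D u) = (∫ u, D u) - ∫ u in Ioi t, D u := by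
    rw [← intervalIntegral.integral_Iic_add_Ioi (b := t) hint.integrableOn hint.integrableOn]
    ring
  -- total mass
  have h3 : c * ∫ u, D u = 1 := by
    rw [hD, D_total hν0, D_integral_Ioi hν0, hc, hsνπ]
    field_simp
  -- hence 1 - tCDF = c * tail
  have h4 : 1 - tCDF ν t = c * ∫ u in Ioi t, D u := by
    rw [h1, h2]; rw [mul_sub, h3]; ring
  -- tail lower bound
  have h5 : ν ^ ((ν-1)/2) * (t ^ 2 + ν) ^ (-(ν/2)) ≤ ∫ u in Ioi t, D u := by
    rw [← phi_integral hν0 ht]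
    refine setIntegral_mono_on ?_ hint.integrableOn measurableSet_Ioi ?_
    · -- integrability of φ on Ioi t (as in phi_integral)
      refine Integrable.mono' ((D_integrable hν0).integrableOn) ?_ ?_
      · apply Continuous.aestronglyMeasurable
        apply continuous_const.mul
        apply continuous_id.mul
        apply Continuous.rpow_const ((continuous_pow 2).add continuous_const)
        intro x
        exact Or.inl (by simp only [Pi.add_apply]; positivity)
      · rw [ae_restrict_iff' measurableSet_Ioi]
        refine Filter.Eventually.of_forall fun u hu => ?_
        have hu0 : (0:ℝ) < u := lt_trans ht hu
        rw [Real.norm_eq_abs, abs_of_nonneg (by positivity)]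
        exact phi_le_D hν0 hu0
    · intro u hu
      exact phi_le_D hν0 (lt_trans ht hu)
  -- the constant κ
  set κ : ℝ := Real.Gamma ((ν + 1) / 2) * (ν - 1) / (2 * Real.sqrt π * Real.Gamma (ν / 2))
    with hκ
  have hκpos : (0:ℝ) < κ := by
    rw [hκ]
    exact div_pos (mul_pos hΓp (by linarith)) (by positivity)
  -- c * ν^((ν-1)/2) ≥ κ
  have h6 : κ ≤ c * ν ^ ((ν-1)/2) := by
    have hsc := scalar_ineq hν
    have hid : c * ν ^ ((ν-1)/2) =
        Real.Gamma ((ν + 1) / 2) * ν ^ ((ν-2)/2) / (Real.sqrt π * Real.Gamma (ν / 2)) := by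
      rw [hc, hsνπ]
      have : ν ^ ((ν-1)/2) = Real.sqrt ν * ν ^ ((ν-2)/2) := by
        rw [Real.sqrt_eq_rpow, ← Real.rpow_add hν0]
        congr 1
        ring
      rw [this]
      field_simp
    rw [hid, hκ, div_le_div_iff₀ (by positivity) (by positivity)]
    nlinarith [mul_pos hsπ hΓν, mul_pos hΓp (mul_pos hsπ hΓν)]
  -- conclude
  have hB : (0:ℝ) < (t ^ 2 + ν) ^ (ν/2) := by positivity
  have hneg : (t ^ 2 + ν) ^ (-(ν/2)) = ((t ^ 2 + ν) ^ (ν/2))⁻¹ :=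
    Real.rpow_neg (by positivity) _
  have h7 : κ * (t ^ 2 + ν) ^ (-(ν/2)) ≤ 1 - tCDF ν t := by
    rw [h4]
    calc κ * (t ^ 2 + ν) ^ (-(ν/2)) ≤ (c * ν ^ ((ν-1)/2)) * (t ^ 2 + ν) ^ (-(ν/2)) := by
          apply mul_le_mul_of_nonneg_right h6 (by positivity)
      _ = c * (ν ^ ((ν-1)/2) * (t ^ 2 + ν) ^ (-(ν/2))) := by ring
      _ ≤ c * ∫ u in Ioi t, D u := by
          apply mul_le_mul_of_nonneg_left h5 hcpos.le
  have h8 : (0:ℝ) < κ * (t ^ 2 + ν) ^ (-(ν/2)) := by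
    apply mul_pos hκpos (by positivity)
  calc 1 / (1 - tCDF ν t) ≤ 1 / (κ * (t ^ 2 + ν) ^ (-(ν/2))) :=
        one_div_le_one_div_of_le h8 h7
    _ = (t ^ 2 + ν) ^ (ν/2) / κ := by
        rw [hneg]
        field_simp
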